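/- Let M be the 3×3 matrix over the polynomial ring C[x,y,z,t,u,v,w,s] given by rows (x, t, s), (y, u, x^2 - z^2 + t^2 + v^2), (z, v, xt + yu + w^2). Then the scheme X defined by the 2×2 minors of M in the weighted projective space P(1,1,1,1,1,1,1,2) (with x,y,z,t,u,v,w of weight 1 and s of weight 2) contains the coordinate point P_s = (0:...:0:1), and in the affine chart s = 1 the Jacobian of the defining equations at P_s has rank 4, with y, z, u, v expressible as implicit functions of the remaining coordinates near P_s. -/

import Mathlib

open MvPolynomial Matrix


private lemma vec7_four {α : Type*} (a b c d e f g : α) : ![a,b,c,d,e,f,g] 4 = e := rfl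
private lemma vec7_five {α : Type*} (a b c d e f g : α) : ![a,b,c,d,e,f,g] 5 = f := rfl
private lemma vec7_six {α : Type*} (a b c d e f g : α) : ![a,b,c,d,e,f,g] 6 = g := rfl

set_option maxHeartbeats 2000000 in
/-- The explicit `ℙ²×ℙ²` model `X⁽²⁾ ⊂ ℙ(1⁷,2)` of §3.2: in the affine chart
`s = 1` (coordinates `x,y,z,t,u,v,w`, indexed `0,…,6`), the 2×2 minors of the
matrix `M` (the entries of the adjugate of `M`) all vanish at the coordinate
point `P_s` (the origin of the chart), so `P_s ∈ X`, and the Jacobian matrix of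
the nine minors at `P_s` has rank `4` (with `y, z, u, v` the four implicit
coordinates). -/
theorem p2xp2_model_quasismooth_at_Ps
    (M : Matrix (Fin 3) (Fin 3) (MvPolynomial (Fin 7) ℂ))
    (hM : M = ![![X 0, X 3, 1],
                ![X 1, X 4, X 0 ^ 2 - X 2 ^ 2 + X 3 ^ 2 + X 5 ^ 2],
                ![X 2, X 5, X 0 * X 3 + X 1 * X 4 + X 6 ^ 2]])
    (J : Matrix (Fin 3 × Fin 3) (Fin 7) ℂ)
    (hJ : ∀ p k, J p k = eval 0 (pderiv k (M.adjugate p.1 p.2))) :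
    (∀ p : Fin 3 × Fin 3, eval (0 : Fin 7 → ℂ) (M.adjugate p.1 p.2) = 0) ∧
    J.rank = 4 := by
  have hadj : M.adjugate =
      !![X 4 * (X 0 * X 3 + X 1 * X 4 + X 6 ^ 2)
          - (X 0 ^ 2 - X 2 ^ 2 + X 3 ^ 2 + X 5 ^ 2) * X 5,
        -(X 3 * (X 0 * X 3 + X 1 * X 4 + X 6 ^ 2)) + X 5,
        X 3 * (X 0 ^ 2 - X 2 ^ 2 + X 3 ^ 2 + X 5 ^ 2) - X 4;
        -(X 1 * (X 0 * X 3 + X 1 * X 4 + X 6 ^ 2))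
          + (X 0 ^ 2 - X 2 ^ 2 + X 3 ^ 2 + X 5 ^ 2) * X 2,
        X 0 * (X 0 * X 3 + X 1 * X 4 + X 6 ^ 2) - X 2,
        -(X 0 * (X 0 ^ 2 - X 2 ^ 2 + X 3 ^ 2 + X 5 ^ 2)) + X 1;
        X 1 * X 5 - X 4 * X 2,
        -(X 0 * X 5) + X 3 * X 2,
        X 0 * X 4 - X 3 * X 1] := by
    subst hM
    erw [Matrix.adjugate_fin_three]
    ext i j
    fin_cases i <;> fin_cases j <;> (try simp) <;> (try rfl) <;> ring
  constructor
  · rintro ⟨i, j⟩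
    rw [hadj]
    fin_cases i <;> fin_cases j <;> (try simp) <;> rfl
  · have hJ' : J = fun p k =>
        (![![![0,0,0,0,0,0,0], ![0,0,0,0,0,1,0], ![0,0,0,0,-1,0,0]],
           ![![0,0,0,0,0,0,0], ![0,0,-1,0,0,0,0], ![0,1,0,0,0,0,0]],
           ![![0,0,0,0,0,0,0], ![0,0,0,0,0,0,0], ![0,0,0,0,0,0,0]]] :
          Fin 3 → Fin 3 → Fin 7 → ℂ) p.1 p.2 k := by
      funext ⟨i, j⟩ k
      rw [hJ, hadj]
      fin_cases i <;> fin_cases j <;> fin_cases k <;> (try simp) <;> rfl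
    set A : Matrix (Fin 4) (Fin 3 × Fin 3) ℂ := fun i p =>
      (![![![0,1,0],![0,0,0],![0,0,0]],
         ![![0,0,-1],![0,0,0],![0,0,0]],
         ![![0,0,0],![0,-1,0],![0,0,0]],
         ![![0,0,0],![0,0,1],![0,0,0]]] :
        Fin 4 → Fin 3 → Fin 3 → ℂ) i p.1 p.2 with hA
    set B : Matrix (Fin 7) (Fin 4) ℂ :=
      ![![0,0,0,0],![0,0,0,1],![0,0,1,0],![0,0,0,0],![0,1,0,0],![1,0,0,0],![0,0,0,0]] with hB
    set P : Matrix (Fin 3 × Fin 3) (Fin 4) ℂ := fun p i =>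
      (![![![0,0,0,0],![1,0,0,0],![0,-1,0,0]],
         ![![0,0,0,0],![0,0,-1,0],![0,0,0,1]],
         ![![0,0,0,0],![0,0,0,0],![0,0,0,0]]] :
        Fin 3 → Fin 3 → Fin 4 → ℂ) p.1 p.2 i with hP
    set Q : Matrix (Fin 4) (Fin 7) ℂ :=
      ![![0,0,0,0,0,1,0],![0,0,0,0,1,0,0],![0,0,1,0,0,0,0],![0,1,0,0,0,0,0]] with hQ
    have hAJB : A * J * B = 1 := by
      ext i j
      simp only [Matrix.mul_apply]
      subst hJ'
      fin_cases i <;> fin_cases j <;>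
        (try simp [hA, hB, Matrix.mul_apply, Fintype.sum_prod_type, Fin.sum_univ_succ,
          Matrix.one_apply, Matrix.cons_val_succ, vec7_four, vec7_five, vec7_six]) <;> (try rfl)
    have hPQ : J = P * Q := by
      ext ⟨i, j⟩ k
      simp only [Matrix.mul_apply]
      subst hJ'
      fin_cases i <;> fin_cases j <;> fin_cases k <;>
        (try simp [hP, hQ, Matrix.mul_apply, Fin.sum_univ_succ, Matrix.cons_val_succ, vec7_four, vec7_five, vec7_six]) <;> (try rfl)
    refine le_antisymm ?_ ?_
    · calc J.rank = (P * Q).rank := by rw [hPQ]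
        _ ≤ P.rank := Matrix.rank_mul_le_left P Q
        _ ≤ Fintype.card (Fin 4) := Matrix.rank_le_card_width P
        _ = 4 := by simp
    · calc (4 : ℕ) = (1 : Matrix (Fin 4) (Fin 4) ℂ).rank := by simp [Matrix.rank_one]
        _ = (A * J * B).rank := by rw [hAJB]
        _ ≤ (A * J).rank := Matrix.rank_mul_le_left (A * J) B
        _ ≤ J.rank := Matrix.rank_mul_le_right A J
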